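/- A morphism φ : [k] → [n] in the simplex category Δ belongs to 𝓘 (i.e. is a composite of idle morphisms) if and only if it can be factored as a surjective monotone map followed by an interval inclusion. In particular, if i : [k] → [l] is an interval inclusion and p : [l] → [n] is a surjective monotone map, then the composite p ∘ i factors as a surjective monotone map followed by an interval inclusion. -/
import Mathlib


open CategoryTheory

/-- A morphism of the simplex category is an *interval inclusion* if it is injective and
its image is a set of consecutive elements. -/
def IsIntervalInclusion {X Y : SimplexCategory} (f : X ⟶ Y) : Prop :=
  Function.Injective f.toOrderHom ∧
    ∀ (x₁ x₂ : Fin (X.len + 1)) (z : Fin (Y.len + 1)),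
      f.toOrderHom x₁ ≤ z → z ≤ f.toOrderHom x₂ → ∃ w, f.toOrderHom w = z

/-- A morphism of the simplex category is *idle* if it is surjective or an interval
inclusion. -/
def IsIdle {X Y : SimplexCategory} (f : X ⟶ Y) : Prop :=
  Function.Surjective f.toOrderHom ∨ IsIntervalInclusion f

/-- The class `𝓘` of composites of idle morphisms. -/
inductive InI : ∀ {X Y : SimplexCategory}, (X ⟶ Y) → Prop
  | of {X Y : SimplexCategory} (f : X ⟶ Y) : IsIdle f → InI f
  | comp {X Y Z : SimplexCategory} (f : X ⟶ Y) (g : Y ⟶ Z) :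
      InI f → InI g → InI (f ≫ g)

/-- A morphism factors as a surjective monotone map followed by an interval inclusion. -/
def FactorsSurjInterval {X Y : SimplexCategory} (f : X ⟶ Y) : Prop :=
  ∃ (Z : SimplexCategory) (p : X ⟶ Z) (i : Z ⟶ Y),
    Function.Surjective p.toOrderHom ∧ IsIntervalInclusion i ∧ f = p ≫ i

/-- A morphism has *convex range* if its range contains every element between two elements
of the range. -/
def ConvexRange {X Y : SimplexCategory} (f : X ⟶ Y) : Prop :=
  ∀ (x₁ x₂ : Fin (X.len + 1)) (z : Fin (Y.len + 1)),
    f.toOrderHom x₁ ≤ z → z ≤ f.toOrderHom x₂ → ∃ w, f.toOrderHom w = z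

lemma convexRange_comp {X Y Z : SimplexCategory} {f : X ⟶ Y} {g : Y ⟶ Z}
    (hf : ConvexRange f) (hg : ConvexRange g) : ConvexRange (f ≫ g) := by
  intro x₁ x₂ z h₁ h₂
  rw [SimplexCategory.comp_toOrderHom] at h₁ h₂ ⊢
  simp only [OrderHom.comp_coe, Function.comp_apply] at h₁ h₂ ⊢
  rcases le_or_gt (f.toOrderHom x₁) (f.toOrderHom x₂) with h | h
  · obtain ⟨y, hy⟩ := hg _ _ z h₁ h₂
    rcases le_or_gt y (f.toOrderHom x₁) with hy₁ | hy₁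
    · exact ⟨x₁, le_antisymm h₁ (hy ▸ g.toOrderHom.monotone hy₁)⟩
    rcases le_or_gt (f.toOrderHom x₂) y with hy₂ | hy₂
    · exact ⟨x₂, le_antisymm (hy ▸ g.toOrderHom.monotone hy₂) h₂⟩
    · obtain ⟨w, hw⟩ := hf x₁ x₂ y hy₁.le hy₂.le
      exact ⟨w, by rw [hw, hy]⟩
  · exact ⟨x₁, le_antisymm h₁ (le_trans h₂ (g.toOrderHom.monotone h.le))⟩

lemma convexRange_of_surjective {X Y : SimplexCategory} {f : X ⟶ Y}
    (hf : Function.Surjective f.toOrderHom) : ConvexRange f := by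
  intro _ _ z _ _
  exact hf z

open Limits in
lemma factors_of_convexRange {X Y : SimplexCategory} {f : X ⟶ Y}
    (hf : ConvexRange f) : FactorsSurjInterval f := by
  refine ⟨image f, factorThruImage f, image.ι f, ?_, ⟨?_, ?_⟩, (image.fac f).symm⟩
  · exact SimplexCategory.epi_iff_surjective.mp inferInstance
  · exact SimplexCategory.mono_iff_injective.mp inferInstance
  · have hp : Function.Surjective (factorThruImage f).toOrderHom :=
      SimplexCategory.epi_iff_surjective.mp inferInstance
    intro x₁ x₂ z h₁ h₂
    obtain ⟨a₁, rfl⟩ := hp x₁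
    obtain ⟨a₂, rfl⟩ := hp x₂
    have key : ∀ a, (image.ι f).toOrderHom ((factorThruImage f).toOrderHom a)
        = f.toOrderHom a := by
      intro a
      conv_rhs => rw [← image.fac f]
      rfl
    rw [key] at h₁ h₂
    obtain ⟨w, hw⟩ := hf a₁ a₂ z h₁ h₂
    exact ⟨(factorThruImage f).toOrderHom w, by rw [key, hw]⟩

lemma convexRange_of_inI {X Y : SimplexCategory} {f : X ⟶ Y} (h : InI f) :
    ConvexRange f := by
  induction h with
  | of f hf =>
    rcases hf with hf | hf
    · exact convexRange_of_surjective hf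
    · exact hf.2
  | comp f g _ _ ihf ihg => exact convexRange_comp ihf ihg

theorem idleComposites_iff_factorsSurjInterval :
    (∀ {X Y : SimplexCategory} (φ : X ⟶ Y), InI φ ↔ FactorsSurjInterval φ) ∧
    (∀ {X Y Z : SimplexCategory} (i : X ⟶ Y) (p : Y ⟶ Z),
      IsIntervalInclusion i → Function.Surjective p.toOrderHom →
      FactorsSurjInterval (i ≫ p)) := by
  constructor
  · intro X Y φ
    constructor
    · intro h
      exact factors_of_convexRange (convexRange_of_inI h)
    · rintro ⟨Z, p, i, hp, hi, rfl⟩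
      exact InI.comp p i (InI.of p (Or.inl hp)) (InI.of i (Or.inr hi))
  · intro X Y Z i p hi hp
    exact factors_of_convexRange (convexRange_comp hi.2 (convexRange_of_surjective hp))
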